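/- arXiv:0906.1825 — 3 statements merged into one kernel-verified Lean document; each statement's English description precedes it below -/
import Mathlib

section
/- (Lemma 3.4, regularized form.) Let λ and μ be partitions and let z₁, z₂ be complex numbers with |z₁| > 1 and 0 < |z₂| < 1. Then both double series below converge absolutely and ∑_{i=1}^{ℓ(λ)} ∑_{j=1}^{∞} (z₁^{λ_i} − 1)·z₁^{1−j}·z₂^{i−μ^t_j} + ∑_{j=1}^{μ_1} ∑_{i=1}^{∞} (z₂^{−μ^t_j} − 1)·z₁^{1−j}·z₂^{i} = ∑_{□∈μ} z₁^{a_λ(□)+1}·z₂^{−l_μ(□)} + ∑_{□∈λ} z₁^{−a_μ(□)}·z₂^{l_λ(□)+1}. (The left-hand side is the regularization of the character ch χ(𝒪,𝒪) − ch χ(I_λ, I_μ) = ∑_{i,j≥1} (z₁^{λ_i−j+1} z₂^{i−μ^t_j} − z₁^{1−j} z₂^{i}).) -/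
open Finset


/-- A partition: a weakly decreasing sequence of nonnegative integers with
finitely many nonzero terms (encoded as a finitely supported function,
`parts i` being the `(i+1)`-st part). -/
structure Ptn where
  parts : ℕ →₀ ℕ
  antitone' : ∀ ⦃i j : ℕ⦄, i ≤ j → parts j ≤ parts i

namespace Ptn

/-- The size `|μ| = ∑ μ_i`. -/
def size (μ : Ptn) : ℕ := μ.parts.sum fun _ v => v

/-- The diagram of `μ`, as a finset of (0-indexed) cells `(i, j)` with `j < μ.parts i`;
the cell `(i, j)` corresponds to the 1-indexed cell `(i+1, j+1)`. -/
def cells (μ : Ptn) : Finset (ℕ × ℕ) :=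
  (Finset.range (μ.size + 1) ×ˢ Finset.range (μ.size + 1)).filter fun c => c.2 < μ.parts c.1

/-- The transpose partition evaluated at the (0-indexed) column `j`:
`μ.conj j = #{i : μ_i ≥ j+1}`. -/
def conj (μ : Ptn) (j : ℕ) : ℕ :=
  ((Finset.range (μ.size + 1)).filter fun i => j < μ.parts i).card

/-- The number of (nonzero) parts `ℓ(μ)`. -/
def len (μ : Ptn) : ℕ := μ.conj 0

/-- The (generalized, possibly negative) arm length `a_lam(c) = lam_i - j`
of the 0-indexed cell `c = (i₀, j₀)` (1-indexed `(i₀+1, j₀+1)`). -/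
def arm (lam : Ptn) (c : ℕ × ℕ) : ℤ := (lam.parts c.1 : ℤ) - c.2 - 1

/-- The (generalized, possibly negative) leg length `l_mu(c) = muᵗ_j - i`
of the 0-indexed cell `c = (i₀, j₀)`. -/
def leg (mu : Ptn) (c : ℕ × ℕ) : ℤ := (mu.conj c.2 : ℤ) - c.1 - 1

end Ptn

lemma sum_ite_range {M : Type*} [AddCommMonoid M] (N t : ℕ) (f : ℕ → M) :
    ∑ j ∈ range N, (if j < t then f j else 0) = ∑ j ∈ range (min N t), f j := by
  rw [← Finset.sum_filter]
  congr 1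
  ext a
  simp only [mem_filter, mem_range, lt_min_iff]

namespace Ptn

variable (μ : Ptn)

lemma lt_size_of_pos {i : ℕ} (h : 0 < μ.parts i) : i < μ.size := by
  have hsub : Finset.range (i + 1) ⊆ μ.parts.support := by
    intro a ha
    rw [Finset.mem_range, Nat.lt_succ_iff] at ha
    exact Finsupp.mem_support_iff.2 (lt_of_lt_of_le h (μ.antitone' ha)).ne'
  have h1 : i + 1 ≤ ∑ a ∈ Finset.range (i + 1), μ.parts a := by
    calc i + 1 = ∑ _a ∈ Finset.range (i + 1), 1 := by simp
    _ ≤ _ := Finset.sum_le_sum (fun a ha => by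
        rw [Finset.mem_range, Nat.lt_succ_iff] at ha
        exact lt_of_lt_of_le h (μ.antitone' ha))
  have h2 : ∑ a ∈ Finset.range (i + 1), μ.parts a ≤ μ.size := by
    rw [Ptn.size, Finsupp.sum]
    exact Finset.sum_le_sum_of_subset hsub
  omega

lemma parts_le_size (i : ℕ) : μ.parts i ≤ μ.size := by
  rcases Nat.eq_zero_or_pos (μ.parts i) with h | h
  · omega
  · rw [Ptn.size, Finsupp.sum]
    exact Finset.single_le_sum (fun a _ => Nat.zero_le _) (Finsupp.mem_support_iff.2 h.ne')

lemma parts_size_eq_zero : μ.parts μ.size = 0 := by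
  by_contra h
  exact absurd (μ.lt_size_of_pos (Nat.pos_of_ne_zero h)) (lt_irrefl _)

lemma lt_conj_iff (i j : ℕ) : i < μ.conj j ↔ j < μ.parts i := by
  have hex : ∃ n, μ.parts n ≤ j := ⟨μ.size, by simp [μ.parts_size_eq_zero]⟩
  have hiff : ∀ a, j < μ.parts a ↔ a < Nat.find hex := by
    intro a
    constructor
    · intro h
      by_contra hic
      push_neg at hic
      exact absurd (le_trans (μ.antitone' hic) (Nat.find_spec hex)) (not_le.2 h)
    · intro h
      exact lt_of_not_ge (Nat.find_min hex h)
  have hcle : Nat.find hex ≤ μ.size := Nat.find_le (by simp [μ.parts_size_eq_zero])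
  have hconj : μ.conj j = Nat.find hex := by
    rw [Ptn.conj]
    have : (Finset.range (μ.size + 1)).filter (fun i => j < μ.parts i)
        = Finset.range (Nat.find hex) := by
      ext a
      simp only [Finset.mem_filter, Finset.mem_range, hiff a]
      omega
    rw [this, Finset.card_range]
  rw [hconj, hiff]

lemma conj_le_size (j : ℕ) : μ.conj j ≤ μ.size := by
  by_contra h
  have := (μ.lt_conj_iff μ.size j).1 (lt_of_not_ge h)
  simp [μ.parts_size_eq_zero] at this

lemma conj_anti {j j' : ℕ} (h : j ≤ j') : μ.conj j' ≤ μ.conj j := by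
  by_contra hc
  push_neg at hc
  have h1 := (μ.lt_conj_iff (μ.conj j) j').1 hc
  have h2 : μ.conj j < μ.conj j := (μ.lt_conj_iff _ j).2 (lt_of_le_of_lt h h1)
  omega

lemma conj_le_len (j : ℕ) : μ.conj j ≤ μ.len := μ.conj_anti (Nat.zero_le j)

lemma conj_eq_zero {j : ℕ} (h : μ.parts 0 ≤ j) : μ.conj j = 0 := by
  by_contra hc
  have := (μ.lt_conj_iff 0 j).1 (Nat.pos_of_ne_zero hc)
  omega

lemma sum_cells {M : Type*} [AddCommMonoid M] (f : ℕ × ℕ → M) :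
    ∑ c ∈ μ.cells, f c = ∑ i ∈ range μ.len, ∑ j ∈ range (μ.parts i), f (i, j) := by
  rw [Ptn.cells, Finset.sum_filter, Finset.sum_product]
  have h1 : ∀ i, ∑ j ∈ range (μ.size + 1), (if j < μ.parts i then f (i, j) else 0)
      = ∑ j ∈ range (μ.parts i), f (i, j) := by
    intro i
    rw [sum_ite_range, min_eq_right (by have := μ.parts_le_size i; omega)]
  simp only [h1]
  refine (Finset.sum_subset (Finset.range_subset_range.2 ?_) ?_).symm
  · have := μ.conj_le_size 0; show μ.conj 0 ≤ _; omega
  · intro x _ hx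
    rw [Finset.mem_range] at hx
    push_neg at hx
    have : μ.parts x = 0 := by
      by_contra h
      have := (μ.lt_conj_iff x 0).2 (Nat.pos_of_ne_zero h)
      have : x < μ.len := this
      omega
    simp [this]

lemma sum_cells' {M : Type*} [AddCommMonoid M] (f : ℕ × ℕ → M) :
    ∑ c ∈ μ.cells, f c = ∑ j ∈ range (μ.parts 0), ∑ i ∈ range (μ.conj j), f (i, j) := by
  rw [Ptn.cells, Finset.sum_filter, Finset.sum_product]
  rw [Finset.sum_comm]
  have h1 : ∀ j, ∑ i ∈ range (μ.size + 1), (if j < μ.parts i then f (i, j) else 0)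
      = ∑ i ∈ range (μ.conj j), f (i, j) := by
    intro j
    have h2 : ∀ i, (if j < μ.parts i then f (i, j) else 0) = (if i < μ.conj j then f (i, j) else 0) := by
      intro i
      simp only [← μ.lt_conj_iff]
    simp only [h2]
    rw [sum_ite_range, min_eq_right (by have := μ.conj_le_size j; omega)]
  simp only [h1]
  refine (Finset.sum_subset (Finset.range_subset_range.2 (by have := μ.parts_le_size 0; omega)) ?_).symm
  intro x _ hx
  rw [Finset.mem_range] at hx
  push_neg at hx
  rw [μ.conj_eq_zero hx]
  simp

end Ptn

lemma swap_sum {M : Type*} [AddCommMonoid M] (a b : ℕ → ℕ)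
    (hab : ∀ i k, k < a i ↔ i < b k) (N n : ℕ) (ha : ∀ i, a i ≤ n) (g : ℕ → ℕ → M) :
    ∑ i ∈ Finset.range N, ∑ k ∈ Finset.range (a i), g i k
      = ∑ k ∈ Finset.range n, ∑ i ∈ Finset.range (min N (b k)), g i k := by
  have h1 : ∀ i, ∑ k ∈ Finset.range (a i), g i k
      = ∑ k ∈ Finset.range n, (if k < a i then g i k else 0) := by
    intro i
    rw [sum_ite_range, min_eq_right (ha i)]
  simp only [h1]
  rw [Finset.sum_comm]
  refine Finset.sum_congr rfl fun k _ => ?_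
  have h2 : ∀ i, (if k < a i then g i k else 0) = (if i < b k then g i k else 0) := by
    intro i
    simp only [hab]
  simp only [h2]
  rw [sum_ite_range]

lemma neg_pow_sub_one (z : ℂ) (hz : z ≠ 0) (n : ℕ) :
    z ^ (-(n : ℤ)) - 1 = (1 - z) * ∑ r ∈ Finset.range n, (z⁻¹) ^ (r + 1) := by
  have h : z ^ (-(n : ℤ)) = (z⁻¹) ^ n := by
    rw [zpow_neg, ← inv_zpow, zpow_natCast]
  rw [h]
  have h2 : (1 - z) * ∑ r ∈ Finset.range n, (z⁻¹) ^ (r + 1)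
      = (∑ r ∈ Finset.range n, (z⁻¹) ^ r) * (z⁻¹ - 1) := by
    rw [Finset.mul_sum, Finset.sum_mul]
    refine Finset.sum_congr rfl fun r _ => ?_
    rw [pow_succ]
    linear_combination (-(z⁻¹ : ℂ) ^ r) * (mul_inv_cancel₀ hz)
  rw [h2, geom_sum_mul]

lemma one_sub_T (z : ℂ) (hz : z ≠ 0) (T : ℕ) :
    z ^ (1 - (T : ℤ)) - (1 - z) * ∑ r ∈ Finset.range T, (z⁻¹) ^ r = z := by
  induction T with
  | zero => simp
  | succ T ih =>
    rw [Finset.sum_range_succ]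
    have h1 : z ^ (1 - ((T : ℕ) + 1 : ℤ)) = z ^ (1 - (T : ℤ)) * z⁻¹ := by
      rw [← zpow_sub_one₀ hz]
      congr 1
      ring
    have h2 : (z⁻¹ : ℂ) ^ T = z ^ (1 - (T : ℤ)) * z⁻¹ := by
      rw [← zpow_sub_one₀ hz, ← zpow_natCast z⁻¹, inv_zpow, ← zpow_neg]
      congr 1
      ring
    push_cast
    rw [h1, h2]
    linear_combination ih + z ^ (1 - (T : ℤ)) * (mul_inv_cancel₀ hz)

lemma geom_inv (z : ℂ) (hz : z ≠ 0) (m : ℕ) :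
    (z - 1) * ∑ j ∈ Finset.range m, (z⁻¹) ^ j = z - z * (z⁻¹) ^ m := by
  induction m with
  | zero => simp
  | succ m ih =>
    rw [Finset.sum_range_succ, pow_succ]
    linear_combination ih + (z⁻¹) ^ m * (mul_inv_cancel₀ hz)

lemma key_min (z : ℂ) (hz : z ≠ 0) (hz1 : z ≠ 1) (L T : ℕ) :
    ∑ i ∈ Finset.range (min L T), (z ^ ((i : ℤ) + 1 - (T : ℤ)) - z ^ ((L : ℤ) - (i : ℤ)))
      = (1 - z) * (∑ i ∈ Finset.range L, z ^ i) * (∑ r ∈ Finset.range T, (z⁻¹) ^ r) := by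
  have hterm : ∀ i : ℕ, z ^ ((i : ℤ) + 1 - (T : ℤ)) - z ^ ((L : ℤ) - (i : ℤ))
      = z ^ i * z * ((z⁻¹) ^ T) - z ^ L * ((z⁻¹) ^ i) := by
    intro i
    rw [sub_eq_add_neg ((i:ℤ)+1), zpow_add₀ hz, zpow_add₀ hz, sub_eq_add_neg (L:ℤ), zpow_add₀ hz]
    rw [zpow_neg, ← inv_zpow, zpow_natCast, zpow_neg, ← inv_zpow, zpow_natCast,
      zpow_natCast, zpow_natCast, zpow_one]
  simp only [hterm]
  rw [Finset.sum_sub_distrib, ← Finset.sum_mul, ← Finset.sum_mul, ← Finset.mul_sum]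
  have hu1 : (z : ℂ)⁻¹ ≠ 1 := fun h => hz1 (inv_eq_one.mp h)
  have hz1' : z - 1 ≠ 0 := sub_ne_zero.mpr hz1
  have hu1' : (z : ℂ)⁻¹ - 1 ≠ 0 := sub_ne_zero.mpr hu1
  have hL : z ^ L ≠ 0 := pow_ne_zero _ hz
  have hT : z ^ T ≠ 0 := pow_ne_zero _ hz
  have e4 : z * z⁻¹ = 1 := mul_inv_cancel₀ hz
  have hne : (z - 1) * (z⁻¹ - 1) ≠ 0 := mul_ne_zero hz1' hu1'
  rcases le_total L T with h | h
  · rw [min_eq_left h]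
    apply mul_left_cancel₀ hne
    have e1 := geom_sum_mul z L
    have e2 := geom_sum_mul (z⁻¹) L
    have e3 := geom_sum_mul (z⁻¹) T
    have e5 : z ^ L * (z⁻¹) ^ L = 1 := by rw [← mul_pow, e4, one_pow]
    linear_combination (((z⁻¹ - 1) * z * (z⁻¹)^T - (1 - z) * ((z⁻¹)^T - 1)) * e1
      + (-(z - 1) * z ^ L) * e2
      + (-(z - 1) * (1 - z) * (∑ i ∈ Finset.range L, z ^ i)) * e3
      + ((z⁻¹)^T * (z ^ L - 1)) * e4
      + (-(z - 1)) * e5)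
  · rw [min_eq_right h]
    apply mul_left_cancel₀ hne
    have eB := geom_sum_mul z T
    have eL := geom_sum_mul z L
    have e3 := geom_sum_mul (z⁻¹) T
    have eBb : z ^ T * (z⁻¹) ^ T = 1 := by rw [← mul_pow, e4, one_pow]
    linear_combination (((z⁻¹ - 1) * z * (z⁻¹)^T) * eB
      + (-(z - 1) * z ^ L - (1 - z) * (z ^ L - 1)) * e3
      + (-(z⁻¹ - 1) * (1 - z) * (∑ r ∈ Finset.range T, (z⁻¹) ^ r)) * eL
      + ((z⁻¹)^T * (z ^ T - 1)) * e4
      + (1 - z) * eBb)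

lemma refl1 (z : ℂ) (hz : z ≠ 0) (T : ℕ) :
    ∑ i ∈ Finset.range T, z ^ ((i : ℤ) + 1 - (T : ℤ)) = ∑ r ∈ Finset.range T, (z⁻¹) ^ r := by
  rw [← Finset.sum_range_reflect]
  refine Finset.sum_congr rfl fun i hi => ?_
  rw [Finset.mem_range] at hi
  rw [← zpow_natCast z⁻¹, inv_zpow, ← zpow_neg]
  congr 1
  have h1 : ((T - 1 - i : ℕ) : ℤ) = (T : ℤ) - 1 - i := by omega
  rw [h1]
  ring

lemma refl2 (z : ℂ) (hz : z ≠ 0) (L : ℕ) :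
    ∑ i ∈ Finset.range L, z ^ ((L : ℤ) - (i : ℤ)) = z * ∑ i ∈ Finset.range L, z ^ i := by
  rw [← Finset.sum_range_reflect, Finset.mul_sum]
  refine Finset.sum_congr rfl fun i hi => ?_
  rw [Finset.mem_range] at hi
  have h1 : (L : ℤ) - ((L - 1 - i : ℕ) : ℤ) = (i : ℤ) + 1 := by omega
  rw [h1, zpow_add_one₀ hz, zpow_natCast]
  ring

lemma row_summable (z₁ z₂ : ℂ) (h1 : 1 < ‖z₁‖) (C : ℂ) (T : ℕ → ℕ) (m : ℕ)
    (hT : ∀ j, m ≤ j → T j = 0) (e : ℤ) :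
    Summable fun j : ℕ => ‖C * z₁ ^ (-(j : ℤ)) * z₂ ^ (e - (T j : ℤ))‖ := by
  have hz1 : z₁ ≠ 0 := by
    intro h; rw [h, norm_zero] at h1; linarith
  have hw : ‖z₁⁻¹‖ < 1 := by
    rw [norm_inv]; exact inv_lt_one_of_one_lt₀ h1
  rw [← summable_nat_add_iff m]
  have heq : ∀ j : ℕ, ‖C * z₁ ^ (-((j + m : ℕ) : ℤ)) * z₂ ^ (e - (T (j + m) : ℤ))‖
      = ‖C * z₁ ^ (-(m : ℤ)) * z₂ ^ e‖ * ‖z₁⁻¹‖ ^ j := by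
    intro j
    rw [hT (j + m) (by omega)]
    have h3 : z₁ ^ (-((j + m : ℕ) : ℤ)) = z₁ ^ (-(m : ℤ)) * (z₁⁻¹) ^ j := by
      rw [← zpow_natCast z₁⁻¹, inv_zpow, ← zpow_neg, ← zpow_add₀ hz1]
      congr 1
      push_cast
      ring
    rw [h3, show C * (z₁ ^ (-(m : ℤ)) * (z₁⁻¹) ^ j) * z₂ ^ (e - ((0 : ℕ) : ℤ))
      = C * z₁ ^ (-(m : ℤ)) * z₂ ^ e * (z₁⁻¹) ^ j by push_cast; rw [sub_zero]; ring]
    rw [norm_mul, norm_pow]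
  rw [summable_congr heq]
  exact (summable_geometric_of_lt_one (norm_nonneg _) hw).mul_left _

lemma row_tsum (z₁ z₂ : ℂ) (h1 : 1 < ‖z₁‖) (C : ℂ) (T : ℕ → ℕ) (m : ℕ)
    (hT : ∀ j, m ≤ j → T j = 0) (e : ℤ) :
    ∑' j : ℕ, C * z₁ ^ (-(j : ℤ)) * z₂ ^ (e - (T j : ℤ))
      = (∑ j ∈ range m, C * z₁ ^ (-(j : ℤ)) * z₂ ^ (e - (T j : ℤ)))
        + C * z₂ ^ e * z₁ ^ (-(m : ℤ)) * (1 - z₁⁻¹)⁻¹ := by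
  have hz1 : z₁ ≠ 0 := by
    intro h; rw [h, norm_zero] at h1; linarith
  have hw : ‖z₁⁻¹‖ < 1 := by
    rw [norm_inv]; exact inv_lt_one_of_one_lt₀ h1
  have hs : Summable fun j : ℕ => C * z₁ ^ (-(j : ℤ)) * z₂ ^ (e - (T j : ℤ)) :=
    Summable.of_norm (row_summable z₁ z₂ h1 C T m hT e)
  rw [← Summable.sum_add_tsum_nat_add m hs]
  congr 1
  have heq : ∀ j : ℕ, C * z₁ ^ (-((j + m : ℕ) : ℤ)) * z₂ ^ (e - (T (j + m) : ℤ))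
      = C * z₂ ^ e * z₁ ^ (-(m : ℤ)) * (z₁⁻¹) ^ j := by
    intro j
    rw [hT (j + m) (by omega)]
    have h3 : z₁ ^ (-((j + m : ℕ) : ℤ)) = z₁ ^ (-(m : ℤ)) * (z₁⁻¹) ^ j := by
      rw [← zpow_natCast z₁⁻¹, inv_zpow, ← zpow_neg, ← zpow_add₀ hz1]
      congr 1
      push_cast
      ring
    rw [h3]
    push_cast
    rw [sub_zero]
    ring
  rw [tsum_congr heq, tsum_mul_left, tsum_geometric_of_norm_lt_one hw]

lemma col_summable (z₂ : ℂ) (h2 : ‖z₂‖ < 1) (hz : z₂ ≠ 0) (C : ℂ) :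
    Summable fun i : ℕ => ‖C * z₂ ^ ((i : ℤ) + 1)‖ := by
  have heq : ∀ i : ℕ, ‖C * z₂ ^ ((i : ℤ) + 1)‖ = ‖C * z₂‖ * ‖z₂‖ ^ i := by
    intro i
    rw [zpow_add_one₀ hz, zpow_natCast,
      show C * (z₂ ^ i * z₂) = C * z₂ * z₂ ^ i by ring, norm_mul, norm_pow]
  rw [summable_congr heq]
  exact (summable_geometric_of_lt_one (norm_nonneg _) h2).mul_left _

lemma col_tsum (z₂ : ℂ) (h2 : ‖z₂‖ < 1) (hz : z₂ ≠ 0) (C : ℂ) :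
    ∑' i : ℕ, C * z₂ ^ ((i : ℤ) + 1) = C * z₂ * (1 - z₂)⁻¹ := by
  have heq : ∀ i : ℕ, C * z₂ ^ ((i : ℤ) + 1) = C * z₂ * z₂ ^ i := by
    intro i
    rw [zpow_add_one₀ hz, zpow_natCast]
    ring
  rw [tsum_congr heq, tsum_mul_left, tsum_geometric_of_norm_lt_one h2]

noncomputable def Psum (ν : Ptn) (x y : ℂ) : ℂ :=
  ∑ k ∈ Finset.range (ν.parts 0), x ^ k * ∑ i ∈ Finset.range (ν.conj k), y ^ i

lemma Prow (ν : Ptn) (x y : ℂ) :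
    ∑ i ∈ range ν.len, (∑ k ∈ range (ν.parts i), x ^ k) * y ^ i = Psum ν x y := by
  have h1 : ∀ i : ℕ, (∑ k ∈ range (ν.parts i), x ^ k) * y ^ i
      = ∑ k ∈ range (ν.parts i), x ^ k * y ^ i := fun i => Finset.sum_mul _ _ _
  simp only [h1]
  rw [swap_sum (fun i => ν.parts i) (fun k => ν.conj k)
    (fun i k => (ν.lt_conj_iff i k).symm) ν.len (ν.parts 0)
    (fun i => ν.antitone' (Nat.zero_le i)) (fun i k => x ^ k * y ^ i)]
  refine Finset.sum_congr rfl fun k _ => ?_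
  rw [min_eq_right (ν.conj_le_len k), Finset.mul_sum]

lemma zpow_neg_nat (z : ℂ) (j : ℕ) : z ^ (-(j : ℤ)) = (z⁻¹) ^ j := by
  rw [zpow_neg, ← inv_zpow, zpow_natCast]

lemma L1a (lam mu : Ptn) (z₁ z₂ : ℂ) (hz2 : z₂ ≠ 0) :
    ∑ i ∈ range lam.len, ∑ j ∈ range (mu.parts 0),
        (z₁ ^ (lam.parts i : ℤ) - 1) * z₁ ^ (-(j : ℤ)) * z₂ ^ ((i : ℤ) + 1 - mu.conj j)
      = (z₁ - 1) * Psum lam z₁ z₂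
        * ∑ j ∈ range (mu.parts 0), (z₁⁻¹) ^ j * z₂ ^ (1 - (mu.conj j : ℤ)) := by
  have hterm : ∀ i j : ℕ,
      (z₁ ^ (lam.parts i : ℤ) - 1) * z₁ ^ (-(j : ℤ)) * z₂ ^ ((i : ℤ) + 1 - mu.conj j)
      = ((z₁ - 1) * ((∑ k ∈ range (lam.parts i), z₁ ^ k) * z₂ ^ i))
        * ((z₁⁻¹) ^ j * z₂ ^ (1 - (mu.conj j : ℤ))) := by
    intro i j
    have e1 : z₁ ^ (lam.parts i : ℤ) - 1 = (z₁ - 1) * ∑ k ∈ range (lam.parts i), z₁ ^ k := by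
      rw [zpow_natCast, ← geom_sum_mul]; ring
    have e2 : z₂ ^ ((i : ℤ) + 1 - mu.conj j) = z₂ ^ i * z₂ ^ (1 - (mu.conj j : ℤ)) := by
      rw [← zpow_natCast z₂ i, ← zpow_add₀ hz2]; congr 1; ring
    rw [e1, e2, zpow_neg_nat]; ring
  simp only [hterm]
  rw [← Finset.sum_mul_sum, ← Finset.mul_sum, Prow lam z₁ z₂]

lemma L1b (lam : Ptn) (z₁ z₂ C : ℂ) (hz2 : z₂ ≠ 0) :
    ∑ i ∈ range lam.len, (z₁ ^ (lam.parts i : ℤ) - 1) * z₂ ^ ((i : ℤ) + 1) * C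
      = (z₁ - 1) * Psum lam z₁ z₂ * (z₂ * C) := by
  have hterm : ∀ i : ℕ, (z₁ ^ (lam.parts i : ℤ) - 1) * z₂ ^ ((i : ℤ) + 1) * C
      = ((z₁ - 1) * ((∑ k ∈ range (lam.parts i), z₁ ^ k) * z₂ ^ i)) * (z₂ * C) := by
    intro i
    have e1 : z₁ ^ (lam.parts i : ℤ) - 1 = (z₁ - 1) * ∑ k ∈ range (lam.parts i), z₁ ^ k := by
      rw [zpow_natCast, ← geom_sum_mul]; ring
    have e2 : z₂ ^ ((i : ℤ) + 1) = z₂ ^ i * z₂ := by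
      rw [zpow_add_one₀ hz2, zpow_natCast]
    rw [e1, e2]; ring
  simp only [hterm]
  rw [← Finset.sum_mul, ← Finset.mul_sum, Prow lam z₁ z₂]

lemma sc (z₁ : ℂ) (hz1 : z₁ ≠ 0) (h11 : z₁ ≠ 1) (m : ℕ) :
    (z₁ - 1) * (∑ j ∈ range m, (z₁⁻¹) ^ j) + (z₁ - 1) * ((z₁⁻¹) ^ m * (1 - z₁⁻¹)⁻¹) = z₁ := by
  have hu1 : (1 : ℂ) - z₁⁻¹ ≠ 0 := by
    intro h
    apply h11
    have h2 : z₁⁻¹ = 1 := by linear_combination -h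
    exact inv_eq_one.mp h2
  have h3 : (z₁ - 1) * (1 - z₁⁻¹)⁻¹ = z₁ := by
    have h4 : z₁ * (1 - z₁⁻¹) = z₁ - 1 := by
      rw [mul_sub, mul_one, mul_inv_cancel₀ hz1]
    rw [← h4, mul_assoc, mul_inv_cancel₀ hu1, mul_one]
  linear_combination geom_inv z₁ hz1 m + ((z₁⁻¹) ^ m) * h3

lemma Rsum (mu : Ptn) (z₁ z₂ : ℂ) (hz2 : z₂ ≠ 0) :
    ∑ j ∈ range (mu.parts 0), (z₁⁻¹) ^ j * z₂ ^ (1 - (mu.conj j : ℤ))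
      = z₂ * (∑ j ∈ range (mu.parts 0), (z₁⁻¹) ^ j) + (1 - z₂) * Psum mu z₁⁻¹ z₂⁻¹ := by
  have hterm : ∀ j : ℕ, (z₁⁻¹ : ℂ) ^ j * z₂ ^ (1 - (mu.conj j : ℤ))
      = z₂ * (z₁⁻¹) ^ j + (1 - z₂) * ((z₁⁻¹) ^ j * ∑ r ∈ range (mu.conj j), (z₂⁻¹) ^ r) := by
    intro j
    linear_combination ((z₁⁻¹ : ℂ) ^ j) * one_sub_T z₂ hz2 (mu.conj j)
  simp only [hterm]
  rw [Finset.sum_add_distrib, ← Finset.mul_sum, ← Finset.mul_sum, Psum]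

lemma L2 (mu : Ptn) (z₁ z₂ : ℂ) (hz2 : z₂ ≠ 0) (h21 : z₂ ≠ 1) :
    ∑ j ∈ range (mu.parts 0), (z₂ ^ (-(mu.conj j : ℤ)) - 1) * z₁ ^ (-(j : ℤ)) * z₂ * (1 - z₂)⁻¹
      = Psum mu z₁⁻¹ z₂⁻¹ := by
  have h1z2 : (1 : ℂ) - z₂ ≠ 0 := sub_ne_zero_of_ne (Ne.symm h21)
  rw [Psum]
  refine Finset.sum_congr rfl fun j _ => ?_
  rw [neg_pow_sub_one z₂ hz2 (mu.conj j), zpow_neg_nat]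
  have hS : z₂ * ∑ r ∈ range (mu.conj j), (z₂⁻¹) ^ (r + 1)
      = ∑ r ∈ range (mu.conj j), (z₂⁻¹) ^ r := by
    rw [Finset.mul_sum]
    refine Finset.sum_congr rfl fun r _ => ?_
    rw [pow_succ]
    linear_combination ((z₂⁻¹ : ℂ) ^ r) * (mul_inv_cancel₀ hz2)
  rw [← hS]
  have h4 : (1 - z₂) * (1 - z₂)⁻¹ = 1 := mul_inv_cancel₀ h1z2
  linear_combination ((∑ r ∈ range (mu.conj j), (z₂⁻¹) ^ (r + 1)) * (z₁⁻¹) ^ j * z₂) * h4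

lemma R1 (lam mu : Ptn) (z₁ z₂ : ℂ) (hz1 : z₁ ≠ 0) (hz2 : z₂ ≠ 0) :
    ∑ j ∈ range (mu.parts 0), ∑ i ∈ range (mu.conj j),
        z₁ ^ ((lam.parts i : ℤ) - j) * z₂ ^ ((i : ℤ) + 1 - mu.conj j)
      = Psum mu z₁⁻¹ z₂⁻¹
        + (z₁ - 1) * ∑ j ∈ range (mu.parts 0), ∑ i ∈ range (mu.conj j),
            (∑ k ∈ range (lam.parts i), z₁ ^ k) * ((z₁⁻¹) ^ j * z₂ ^ ((i : ℤ) + 1 - mu.conj j)) := by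
  have hterm : ∀ i j : ℕ, z₁ ^ ((lam.parts i : ℤ) - j) * z₂ ^ ((i : ℤ) + 1 - mu.conj j)
      = (z₁⁻¹) ^ j * z₂ ^ ((i : ℤ) + 1 - mu.conj j)
        + (z₁ - 1) * ((∑ k ∈ range (lam.parts i), z₁ ^ k)
            * ((z₁⁻¹) ^ j * z₂ ^ ((i : ℤ) + 1 - mu.conj j))) := by
    intro i j
    have e1 : z₁ ^ ((lam.parts i : ℤ) - j) = z₁ ^ (lam.parts i : ℤ) * (z₁⁻¹) ^ j := by
      rw [sub_eq_add_neg, zpow_add₀ hz1, zpow_neg_nat]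
    have e2 : z₁ ^ (lam.parts i : ℤ) = 1 + (z₁ - 1) * ∑ k ∈ range (lam.parts i), z₁ ^ k := by
      rw [zpow_natCast]
      linear_combination - geom_sum_mul z₁ (lam.parts i)
    rw [e1, e2]; ring
  simp only [hterm]
  simp only [Finset.sum_add_distrib]
  congr 1
  · rw [Psum]
    refine Finset.sum_congr rfl fun j _ => ?_
    rw [← Finset.mul_sum, refl1 z₂ hz2 (mu.conj j)]
  · simp only [← Finset.mul_sum]

lemma R2 (lam mu : Ptn) (z₁ z₂ : ℂ) (hz1 : z₁ ≠ 0) (hz2 : z₂ ≠ 0) :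
    ∑ i ∈ range lam.len, ∑ k ∈ range (lam.parts i),
        z₁ ^ ((k : ℤ) + 1 - mu.parts i) * z₂ ^ ((lam.conj k : ℤ) - i)
      = z₁ * z₂ * Psum lam z₁ z₂
        - (z₁ - 1) * ∑ i ∈ range lam.len, ∑ k ∈ range (lam.parts i),
            (∑ j ∈ range (mu.parts i), (z₁⁻¹) ^ j) * (z₁ ^ k * z₂ ^ ((lam.conj k : ℤ) - i)) := by
  have hterm : ∀ i k : ℕ, z₁ ^ ((k : ℤ) + 1 - mu.parts i) * z₂ ^ ((lam.conj k : ℤ) - i)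
      = z₁ ^ k * z₁ * z₂ ^ ((lam.conj k : ℤ) - i)
        - (z₁ - 1) * ((∑ j ∈ range (mu.parts i), (z₁⁻¹) ^ j)
            * (z₁ ^ k * z₂ ^ ((lam.conj k : ℤ) - i))) := by
    intro i k
    have e1 : z₁ ^ ((k : ℤ) + 1 - (mu.parts i : ℤ)) = z₁ ^ k * z₁ * z₁ ^ (-(mu.parts i : ℤ)) := by
      rw [show (k : ℤ) + 1 - (mu.parts i : ℤ) = (k : ℤ) + (1 + -(mu.parts i : ℤ)) by ring,
        zpow_add₀ hz1, zpow_add₀ hz1, zpow_natCast, zpow_one]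
      ring
    have e2 := neg_pow_sub_one z₁ hz1 (mu.parts i)
    have e3 : z₁ * ∑ j ∈ range (mu.parts i), (z₁⁻¹) ^ (j + 1)
        = ∑ j ∈ range (mu.parts i), (z₁⁻¹) ^ j := by
      rw [Finset.mul_sum]
      refine Finset.sum_congr rfl fun r _ => ?_
      rw [pow_succ]
      linear_combination ((z₁⁻¹ : ℂ) ^ r) * (mul_inv_cancel₀ hz1)
    rw [e1]
    linear_combination (z₁ ^ k * z₂ ^ ((lam.conj k : ℤ) - (i : ℤ)) * z₁) * e2
      - (z₁ - 1) * (z₁ ^ k * z₂ ^ ((lam.conj k : ℤ) - (i : ℤ))) * e3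
  simp only [hterm]
  simp only [Finset.sum_sub_distrib]
  congr 1
  · rw [swap_sum (fun i => lam.parts i) (fun k => lam.conj k)
      (fun i k => (lam.lt_conj_iff i k).symm) lam.len (lam.parts 0)
      (fun i => lam.antitone' (Nat.zero_le i))
      (fun i k => z₁ ^ k * z₁ * z₂ ^ ((lam.conj k : ℤ) - i))]
    rw [Psum, Finset.mul_sum]
    refine Finset.sum_congr rfl fun k _ => ?_
    rw [min_eq_right (lam.conj_le_len k), ← Finset.mul_sum, refl2 z₂ hz2 (lam.conj k)]
    ring
  · simp only [← Finset.mul_sum]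

lemma Dlemma (lam mu : Ptn) (z₁ z₂ : ℂ) (hz1 : z₁ ≠ 0) (hz2 : z₂ ≠ 0) (h21 : z₂ ≠ 1) :
    (∑ j ∈ range (mu.parts 0), ∑ i ∈ range (mu.conj j),
        (∑ k ∈ range (lam.parts i), z₁ ^ k) * ((z₁⁻¹) ^ j * z₂ ^ ((i : ℤ) + 1 - mu.conj j)))
      - (∑ i ∈ range lam.len, ∑ k ∈ range (lam.parts i),
          (∑ j ∈ range (mu.parts i), (z₁⁻¹) ^ j) * (z₁ ^ k * z₂ ^ ((lam.conj k : ℤ) - i)))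
    = (1 - z₂) * Psum lam z₁ z₂ * Psum mu z₁⁻¹ z₂⁻¹ := by
  have hD1 : ∑ j ∈ range (mu.parts 0), ∑ i ∈ range (mu.conj j),
        (∑ k ∈ range (lam.parts i), z₁ ^ k) * ((z₁⁻¹) ^ j * z₂ ^ ((i : ℤ) + 1 - mu.conj j))
      = ∑ k ∈ range (lam.parts 0), ∑ j ∈ range (mu.parts 0), z₁ ^ k * (z₁⁻¹) ^ j
          * ∑ i ∈ range (min (lam.conj k) (mu.conj j)), z₂ ^ ((i : ℤ) + 1 - mu.conj j) := by
    have h1 : ∀ j ∈ range (mu.parts 0), ∑ i ∈ range (mu.conj j),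
          (∑ k ∈ range (lam.parts i), z₁ ^ k) * ((z₁⁻¹) ^ j * z₂ ^ ((i : ℤ) + 1 - mu.conj j))
        = ∑ k ∈ range (lam.parts 0), ∑ i ∈ range (min (mu.conj j) (lam.conj k)),
            z₁ ^ k * ((z₁⁻¹) ^ j * z₂ ^ ((i : ℤ) + 1 - mu.conj j)) := by
      intro j _
      rw [← swap_sum (fun i => lam.parts i) (fun k => lam.conj k)
        (fun i k => (lam.lt_conj_iff i k).symm) (mu.conj j) (lam.parts 0)
        (fun i => lam.antitone' (Nat.zero_le i))
        (fun i k => z₁ ^ k * ((z₁⁻¹) ^ j * z₂ ^ ((i : ℤ) + 1 - mu.conj j)))]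
      exact Finset.sum_congr rfl fun i _ => Finset.sum_mul _ _ _
    rw [Finset.sum_congr rfl h1, Finset.sum_comm]
    refine Finset.sum_congr rfl fun k _ => Finset.sum_congr rfl fun j _ => ?_
    rw [min_comm, Finset.mul_sum]
    exact Finset.sum_congr rfl fun i _ => by ring
  have hD2 : ∑ i ∈ range lam.len, ∑ k ∈ range (lam.parts i),
        (∑ j ∈ range (mu.parts i), (z₁⁻¹) ^ j) * (z₁ ^ k * z₂ ^ ((lam.conj k : ℤ) - i))
      = ∑ k ∈ range (lam.parts 0), ∑ j ∈ range (mu.parts 0), z₁ ^ k * (z₁⁻¹) ^ j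
          * ∑ i ∈ range (min (lam.conj k) (mu.conj j)), z₂ ^ ((lam.conj k : ℤ) - i) := by
    rw [swap_sum (fun i => lam.parts i) (fun k => lam.conj k)
      (fun i k => (lam.lt_conj_iff i k).symm) lam.len (lam.parts 0)
      (fun i => lam.antitone' (Nat.zero_le i))
      (fun i k => (∑ j ∈ range (mu.parts i), (z₁⁻¹) ^ j)
        * (z₁ ^ k * z₂ ^ ((lam.conj k : ℤ) - i)))]
    refine Finset.sum_congr rfl fun k _ => ?_
    rw [min_eq_right (lam.conj_le_len k)]
    have h2 : ∑ i ∈ range (lam.conj k),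
          (∑ j ∈ range (mu.parts i), (z₁⁻¹) ^ j) * (z₁ ^ k * z₂ ^ ((lam.conj k : ℤ) - i))
        = ∑ j ∈ range (mu.parts 0), ∑ i ∈ range (min (lam.conj k) (mu.conj j)),
            (z₁⁻¹) ^ j * (z₁ ^ k * z₂ ^ ((lam.conj k : ℤ) - i)) := by
      rw [← swap_sum (fun i => mu.parts i) (fun j => mu.conj j)
        (fun i j => (mu.lt_conj_iff i j).symm) (lam.conj k) (mu.parts 0)
        (fun i => mu.antitone' (Nat.zero_le i))
        (fun i j => (z₁⁻¹) ^ j * (z₁ ^ k * z₂ ^ ((lam.conj k : ℤ) - i)))]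
      exact Finset.sum_congr rfl fun i _ => Finset.sum_mul _ _ _
    rw [h2]
    refine Finset.sum_congr rfl fun j _ => ?_
    rw [Finset.mul_sum]
    exact Finset.sum_congr rfl fun i _ => by ring
  rw [hD1, hD2, ← Finset.sum_sub_distrib]
  have h3 : ∀ k ∈ range (lam.parts 0),
      (∑ j ∈ range (mu.parts 0), z₁ ^ k * (z₁⁻¹) ^ j
          * ∑ i ∈ range (min (lam.conj k) (mu.conj j)), z₂ ^ ((i : ℤ) + 1 - mu.conj j))
        - (∑ j ∈ range (mu.parts 0), z₁ ^ k * (z₁⁻¹) ^ j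
          * ∑ i ∈ range (min (lam.conj k) (mu.conj j)), z₂ ^ ((lam.conj k : ℤ) - i))
      = ∑ j ∈ range (mu.parts 0), z₁ ^ k * (z₁⁻¹) ^ j
          * ((1 - z₂) * (∑ i ∈ range (lam.conj k), z₂ ^ i)
            * (∑ r ∈ range (mu.conj j), (z₂⁻¹) ^ r)) := by
    intro k _
    rw [← Finset.sum_sub_distrib]
    refine Finset.sum_congr rfl fun j _ => ?_
    rw [← mul_sub, ← Finset.sum_sub_distrib, key_min z₂ hz2 h21 (lam.conj k) (mu.conj j)]
  rw [Finset.sum_congr rfl h3, Psum, Psum, mul_assoc, Finset.sum_mul_sum]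
  refine Eq.symm ?_
  rw [Finset.mul_sum]
  refine Finset.sum_congr rfl fun k _ => ?_
  rw [Finset.mul_sum]
  refine Finset.sum_congr rfl fun j _ => ?_
  ring

lemma main_alg (lam mu : Ptn) (z₁ z₂ : ℂ) (hz1 : z₁ ≠ 0) (h11 : z₁ ≠ 1)
    (hz2 : z₂ ≠ 0) (h21 : z₂ ≠ 1) :
    (∑ i ∈ range lam.len, ∑ j ∈ range (mu.parts 0),
        (z₁ ^ (lam.parts i : ℤ) - 1) * z₁ ^ (-(j : ℤ)) * z₂ ^ ((i : ℤ) + 1 - mu.conj j))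
      + (∑ i ∈ range lam.len,
          (z₁ ^ (lam.parts i : ℤ) - 1) * z₂ ^ ((i : ℤ) + 1)
            * z₁ ^ (-(mu.parts 0 : ℤ)) * (1 - z₁⁻¹)⁻¹)
      + (∑ j ∈ range (mu.parts 0),
          (z₂ ^ (-(mu.conj j : ℤ)) - 1) * z₁ ^ (-(j : ℤ)) * z₂ * (1 - z₂)⁻¹)
    = (∑ j ∈ range (mu.parts 0), ∑ i ∈ range (mu.conj j),
        z₁ ^ ((lam.parts i : ℤ) - j) * z₂ ^ ((i : ℤ) + 1 - mu.conj j))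
      + ∑ i ∈ range lam.len, ∑ k ∈ range (lam.parts i),
          z₁ ^ ((k : ℤ) + 1 - mu.parts i) * z₂ ^ ((lam.conj k : ℤ) - i) := by
  have hassoc : ∀ i : ℕ, (z₁ ^ (lam.parts i : ℤ) - 1) * z₂ ^ ((i : ℤ) + 1)
      * z₁ ^ (-(mu.parts 0 : ℤ)) * (1 - z₁⁻¹)⁻¹
      = (z₁ ^ (lam.parts i : ℤ) - 1) * z₂ ^ ((i : ℤ) + 1)
        * (z₁ ^ (-(mu.parts 0 : ℤ)) * (1 - z₁⁻¹)⁻¹) := fun i => by ring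
  simp only [hassoc]
  rw [L1a lam mu z₁ z₂ hz2, Rsum mu z₁ z₂ hz2,
    L1b lam z₁ z₂ (z₁ ^ (-(mu.parts 0 : ℤ)) * (1 - z₁⁻¹)⁻¹) hz2,
    L2 mu z₁ z₂ hz2 h21, R1 lam mu z₁ z₂ hz1 hz2, R2 lam mu z₁ z₂ hz1 hz2,
    zpow_neg_nat z₁ (mu.parts 0)]
  linear_combination (-(z₁ - 1)) * Dlemma lam mu z₁ z₂ hz1 hz2 h21
    + (Psum lam z₁ z₂ * z₂) * sc z₁ hz1 h11 (mu.parts 0)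

/-- Lemma 3.4 (regularized form).  Indices are 0-indexed: the 1-indexed row `i`
is `i₀ + 1` and the 1-indexed column `j` is `j₀ + 1`, so e.g.
`z₁^{1-j} = z₁^{-j₀}` and `z₂^{i - μᵗ_j} = z₂^{(i₀+1) - μ.conj j₀}`. -/
theorem stmt1 (lam mu : Ptn) (z₁ z₂ : ℂ) (h1 : 1 < ‖z₁‖) (h2 : 0 < ‖z₂‖) (h2' : ‖z₂‖ < 1) :
    (∀ i ∈ Finset.range lam.len,
        Summable fun j : ℕ =>
          ‖(z₁ ^ (lam.parts i : ℤ) - 1) * z₁ ^ (-(j : ℤ)) * z₂ ^ ((i : ℤ) + 1 - mu.conj j)‖)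
    ∧ (∀ j ∈ Finset.range (mu.parts 0),
        Summable fun i : ℕ =>
          ‖(z₂ ^ (-(mu.conj j : ℤ)) - 1) * z₁ ^ (-(j : ℤ)) * z₂ ^ ((i : ℤ) + 1)‖)
    ∧ (∑ i ∈ Finset.range lam.len, ∑' j : ℕ,
          (z₁ ^ (lam.parts i : ℤ) - 1) * z₁ ^ (-(j : ℤ)) * z₂ ^ ((i : ℤ) + 1 - mu.conj j))
        + (∑ j ∈ Finset.range (mu.parts 0), ∑' i : ℕ,
            (z₂ ^ (-(mu.conj j : ℤ)) - 1) * z₁ ^ (-(j : ℤ)) * z₂ ^ ((i : ℤ) + 1))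
      = (∑ c ∈ mu.cells, z₁ ^ (lam.arm c + 1) * z₂ ^ (-(mu.leg c)))
        + (∑ c ∈ lam.cells, z₁ ^ (-(mu.arm c)) * z₂ ^ (lam.leg c + 1)) := by
  have hz1 : z₁ ≠ 0 := fun h => by rw [h, norm_zero] at h1; linarith
  have hz2 : z₂ ≠ 0 := fun h => by rw [h, norm_zero] at h2; exact lt_irrefl _ h2
  have h11 : z₁ ≠ 1 := fun h => by rw [h, norm_one] at h1; exact lt_irrefl _ h1
  have h21 : z₂ ≠ 1 := fun h => by rw [h, norm_one] at h2'; exact lt_irrefl _ h2'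
  refine ⟨fun i _ => row_summable z₁ z₂ h1 _ (fun j => mu.conj j) (mu.parts 0)
      (fun j hj => mu.conj_eq_zero hj) ((i : ℤ) + 1),
    fun j _ => col_summable z₂ h2' hz2 _, ?_⟩
  have hrow : ∀ i ∈ Finset.range lam.len,
      (∑' j : ℕ, (z₁ ^ (lam.parts i : ℤ) - 1) * z₁ ^ (-(j : ℤ)) * z₂ ^ ((i : ℤ) + 1 - mu.conj j))
        = (∑ j ∈ Finset.range (mu.parts 0),
            (z₁ ^ (lam.parts i : ℤ) - 1) * z₁ ^ (-(j : ℤ)) * z₂ ^ ((i : ℤ) + 1 - mu.conj j))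
          + (z₁ ^ (lam.parts i : ℤ) - 1) * z₂ ^ ((i : ℤ) + 1)
            * z₁ ^ (-(mu.parts 0 : ℤ)) * (1 - z₁⁻¹)⁻¹ :=
    fun i _ => row_tsum z₁ z₂ h1 _ (fun j => mu.conj j) (mu.parts 0)
      (fun j hj => mu.conj_eq_zero hj) ((i : ℤ) + 1)
  have hcol : ∀ j ∈ Finset.range (mu.parts 0),
      (∑' i : ℕ, (z₂ ^ (-(mu.conj j : ℤ)) - 1) * z₁ ^ (-(j : ℤ)) * z₂ ^ ((i : ℤ) + 1))
        = (z₂ ^ (-(mu.conj j : ℤ)) - 1) * z₁ ^ (-(j : ℤ)) * z₂ * (1 - z₂)⁻¹ :=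
    fun j _ => col_tsum z₂ h2' hz2 _
  rw [Finset.sum_congr rfl hrow, Finset.sum_congr rfl hcol, Finset.sum_add_distrib]
  have ecell1 : ∀ c ∈ mu.cells, z₁ ^ (lam.arm c + 1) * z₂ ^ (-(mu.leg c))
      = z₁ ^ ((lam.parts c.1 : ℤ) - c.2) * z₂ ^ ((c.1 : ℤ) + 1 - mu.conj c.2) := by
    intro c _
    rw [Ptn.arm, Ptn.leg]
    congr 1
    · congr 1
      ring
    · congr 1
      ring
  have ecell2 : ∀ c ∈ lam.cells, z₁ ^ (-(mu.arm c)) * z₂ ^ (lam.leg c + 1)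
      = z₁ ^ ((c.2 : ℤ) + 1 - mu.parts c.1) * z₂ ^ ((lam.conj c.2 : ℤ) - c.1) := by
    intro c _
    rw [Ptn.arm, Ptn.leg]
    congr 1
    · congr 1
      ring
    · congr 1
      ring
  rw [Finset.sum_congr rfl ecell1, Finset.sum_congr rfl ecell2,
    mu.sum_cells' (fun c => z₁ ^ ((lam.parts c.1 : ℤ) - c.2) * z₂ ^ ((c.1 : ℤ) + 1 - mu.conj c.2)),
    lam.sum_cells (fun c => z₁ ^ ((c.2 : ℤ) + 1 - mu.parts c.1) * z₂ ^ ((lam.conj c.2 : ℤ) - c.1))]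
  exact main_alg lam mu z₁ z₂ hz1 h11 hz2 h21
end

section
/- (Lemma 3.6, the matrix element identity for a column and a row, as a polynomial identity.) For all complex numbers m, t₁, t₂ and all integers k, l ≥ 1: ∏_{j=0}^{k−1} (m − j·t₂) · ∏_{j=0}^{l−1} (m + t₁ + t₂ + j·t₁) + k·l·t₁·t₂ · ∏_{j=0}^{k−2} (m − j·t₂) · ∏_{j=0}^{l−2} (m + t₁ + t₂ + j·t₁) = (m + l·t₁ − (k−1)·t₂) · ∏_{j=0}^{k−2} (m − j·t₂) · ∏_{j=0}^{l−1} (m + t₂ + j·t₁), where a product over an empty index range equals 1. (The right-hand side equals ∏_{□∈(1^k)} (m + t₁·a_{(l)}(□) + t₁ − t₂·l_{(1^k)}(□)) · ∏_{□∈(l)} (m − t₁·a_{(1^k)}(□) + t₂·l_{(l)}(□) + t₂), the predicted matrix element of the vertex operator between the column partition (1^k) and the row partition (l).) -/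
/-- Lemma 3.6 as a polynomial identity: for all `m, t₁, t₂ ∈ ℂ` and integers `k, l ≥ 1`,
`∏_{j=0}^{k-1}(m - j t₂) · ∏_{j=0}^{l-1}(m + t₁ + t₂ + j t₁)
 + k·l·t₁·t₂ · ∏_{j=0}^{k-2}(m - j t₂) · ∏_{j=0}^{l-2}(m + t₁ + t₂ + j t₁)
 = (m + l t₁ - (k-1) t₂) · ∏_{j=0}^{k-2}(m - j t₂) · ∏_{j=0}^{l-1}(m + t₂ + j t₁)`. -/
theorem stmt3 (m t₁ t₂ : ℂ) (k l : ℕ) (hk : 1 ≤ k) (hl : 1 ≤ l) :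
    (∏ j ∈ Finset.range k, (m - (j : ℂ) * t₂)) *
        (∏ j ∈ Finset.range l, (m + t₁ + t₂ + (j : ℂ) * t₁))
      + (k : ℂ) * (l : ℂ) * t₁ * t₂ *
          (∏ j ∈ Finset.range (k - 1), (m - (j : ℂ) * t₂)) *
          (∏ j ∈ Finset.range (l - 1), (m + t₁ + t₂ + (j : ℂ) * t₁))
      = (m + (l : ℂ) * t₁ - ((k : ℂ) - 1) * t₂) *
          (∏ j ∈ Finset.range (k - 1), (m - (j : ℂ) * t₂)) *
          (∏ j ∈ Finset.range l, (m + t₂ + (j : ℂ) * t₁)) := by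
  obtain ⟨k', rfl⟩ : ∃ k', k = k' + 1 := ⟨k - 1, by omega⟩
  obtain ⟨l', rfl⟩ : ∃ l', l = l' + 1 := ⟨l - 1, by omega⟩
  simp only [Nat.add_sub_cancel]
  have hC : (∏ j ∈ Finset.range (l' + 1), (m + t₂ + (j : ℂ) * t₁))
      = (∏ j ∈ Finset.range l', (m + t₁ + t₂ + (j : ℂ) * t₁)) * (m + t₂) := by
    rw [Finset.prod_range_succ']
    congr 1
    · apply Finset.prod_congr rfl
      intro j _
      push_cast
      ring
    · simp
  rw [Finset.prod_range_succ, Finset.prod_range_succ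
    (f := fun j : ℕ => (m + t₁ + t₂ + (j : ℂ) * t₁)), hC]
  push_cast
  ring
end

section
/- (Existence, uniqueness, and bijectivity of the blended partition, Section 5.3.) Fix an integer r ≥ 1. For a partition ν let B(ν) = {ν_j − j + 1 : j ≥ 1} ⊆ ℤ be its β-set. Let b₁, …, b_r be integers with b₁ + ⋯ + b_r = 0 and let μ^{[1]}, …, μ^{[r]} be partitions. Then the sets S_i = {r·(μ^{[i]}_j − j + b_i) + i : j ≥ 1}, for i = 1, …, r, are pairwise disjoint, and there exists a unique partition μ = bl(b₁,…,b_r; μ^{[1]},…,μ^{[r]}) with B(μ) = S₁ ⊔ ⋯ ⊔ S_r. Moreover, the resulting map from the set of tuples (b₁,…,b_r; μ^{[1]},…,μ^{[r]}) with ∑ b_i = 0 to the set of all partitions is a bijection. -/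
namespace Ptn

/-- The β-set `B(ν) = {ν_j - j + 1 : j ≥ 1}` (0-indexed: `{ν.parts j - j : j ≥ 0}`). -/
def betaSet (ν : Ptn) : Set ℤ := Set.range fun j : ℕ => (ν.parts j : ℤ) - j

end Ptn

/-- The `i`-th shifted-and-dilated β-set
`S_i = {r·(μ^{[i]}_j - j + b_i) + i : j ≥ 1}` (with `i : Fin r` denoting the
1-indexed label `i + 1`, and `j` 0-indexed so that the 1-indexed `j` is `j + 1`). -/
def blendSet (r : ℕ) (b : Fin r → ℤ) (μs : Fin r → Ptn) (i : Fin r) : Set ℤ :=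
  Set.range fun j : ℕ =>
    (r : ℤ) * (((μs i).parts j : ℤ) - ((j : ℤ) + 1) + b i) + ((i : ℕ) + 1)

namespace Blend

lemma strictAnti_range_inj {f g : ℕ → ℤ} (hf : StrictAnti f) (hg : StrictAnti g)
    (h : Set.range f = Set.range g) : f = g := by
  have hf' : StrictMono (fun n => -f n) := fun a b hab => neg_lt_neg (hf hab)
  have hg' : StrictMono (fun n => -g n) := fun a b hab => neg_lt_neg (hg hab)
  have hr : Set.range (fun n => -f n) = Set.range (fun n => -g n) := by
    have e1 : (fun n => -f n) = Neg.neg ∘ f := rfl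
    have e2 : (fun n => -g n) = Neg.neg ∘ g := rfl
    rw [e1, e2, Set.range_comp, Set.range_comp, h]
  have := (hf'.range_inj hg').mp hr
  funext n
  have := congrFun this n
  simpa using this

/-- the shifted β-enumeration of a partition -/
def en (ν : Ptn) (c : ℤ) : ℕ → ℤ := fun j => (ν.parts j : ℤ) - j + c

lemma en_strictAnti (ν : Ptn) (c : ℤ) : StrictAnti (en ν c) := by
  apply strictAnti_nat_of_succ_lt
  intro n
  have := ν.antitone' (Nat.le_succ n)
  unfold en
  have h2 : (ν.parts (n+1) : ℤ) ≤ (ν.parts n : ℤ) := by exact_mod_cast this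
  push_cast
  omega

lemma exists_support_bound (ν : Ptn) : ∃ N : ℕ, ∀ j, N ≤ j → ν.parts j = 0 := by
  obtain ⟨N, hN⟩ := ν.parts.support.exists_nat_subset_range
  exact ⟨N, fun j hj => Finsupp.notMem_support_iff.mp
    (fun hmem => by have := hN hmem; simp at this; omega)⟩

lemma en_eventually (ν : Ptn) (c : ℤ) : ∃ N : ℕ, ∀ j, N ≤ j → en ν c j = c - j := by
  obtain ⟨N, hN⟩ := exists_support_bound ν
  exact ⟨N, fun j hj => by simp [en, hN j hj]; ring⟩

lemma pair_eq {c c' : ℤ} {ν ν' : Ptn}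
    (h : Set.range (en ν c) = Set.range (en ν' c')) : c = c' ∧ ν = ν' := by
  have he := strictAnti_range_inj (en_strictAnti ν c) (en_strictAnti ν' c') h
  obtain ⟨N, hN⟩ := en_eventually ν c
  obtain ⟨N', hN'⟩ := en_eventually ν' c'
  have hc : c = c' := by
    have := congrFun he (max N N')
    rw [hN _ (le_max_left _ _), hN' _ (le_max_right _ _)] at this
    omega
  refine ⟨hc, ?_⟩
  have hp : ∀ j, ν.parts j = ν'.parts j := by
    intro j
    have := congrFun he j
    unfold en at this
    omega
  cases ν with
  | mk p hp1 => cases ν' with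
    | mk p' hp2 =>
      simp only [Ptn.mk.injEq]
      exact Finsupp.ext hp


lemma exists_pair (S : Set ℤ) (m : ℤ) (hm : Set.Iic m ⊆ S) (M : ℤ)
    (hM : ∀ z ∈ S, z ≤ M) : ∃ c : ℤ, ∃ ν : Ptn, S = Set.range (en ν c) := by
  have htop : ∃ y, y ∈ S ∧ ∀ z, z ∈ S → z ≤ y :=
    Int.exists_greatest_of_bdd ⟨M, hM⟩ ⟨m, hm (Set.mem_Iic.mpr le_rfl)⟩
  have hnext : ∀ x : ℤ, ∃ y, (y ∈ S ∧ y < x) ∧ ∀ z, (z ∈ S ∧ z < x) → z ≤ y := by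
    intro x
    apply Int.exists_greatest_of_bdd
    · exact ⟨M, fun z hz => hM z hz.1⟩
    · refine ⟨min m (x - 1), hm (by simp), ?_⟩
      omega
  set f : ℕ → ℤ := fun n => Nat.rec (Classical.choose htop)
    (fun _ prev => Classical.choose (hnext prev)) n with hfdef
  have hf0 : f 0 = Classical.choose htop := rfl
  have hfs : ∀ n, f (n + 1) = Classical.choose (hnext (f n)) := fun n => rfl
  have fmem : ∀ n, f n ∈ S := by
    intro n
    cases n with
    | zero => exact (Classical.choose_spec htop).1
    | succ k => exact (Classical.choose_spec (hnext (f k))).1.1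
  have flt : ∀ n, f (n + 1) < f n := fun n => (Classical.choose_spec (hnext (f n))).1.2
  have fmax0 : ∀ z, z ∈ S → z ≤ f 0 := (Classical.choose_spec htop).2
  have fmaxs : ∀ n z, z ∈ S → z < f n → z ≤ f (n + 1) :=
    fun n z hz hlt => (Classical.choose_spec (hnext (f n))).2 z ⟨hz, hlt⟩
  have hanti : StrictAnti f := strictAnti_nat_of_succ_lt flt
  have fdecay : ∀ a k : ℕ, f (a + k) + k ≤ f a := by
    intro a k
    induction k with
    | zero => simp
    | succ n ih =>
      have := flt (a + n)
      push_cast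
      have : f (a + (n+1)) < f (a + n) := by
        have : a + (n+1) = (a+n) + 1 := by omega
        rw [this]; exact flt (a+n)
      push_cast at ih ⊢
      omega
  have hrange : Set.range f = S := by
    apply Set.Subset.antisymm
    · rintro z ⟨n, rfl⟩; exact fmem n
    · intro s hs
      have hex : ∃ j, f j ≤ s := by
        refine ⟨(f 0 - s).toNat, ?_⟩
        have := fdecay 0 (f 0 - s).toNat
        have h0 : s ≤ f 0 := fmax0 s hs
        simp at this
        omega
      classical
      let j := Nat.find hex
      have hj : f j ≤ s := Nat.find_spec hex
      have hmin : ∀ k, k < j → s < f k := fun k hk => by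
        have := Nat.find_min hex hk; omega
      cases hjj : j with
      | zero =>
        have : f 0 ≤ s := by rw [hjj] at hj; exact hj
        exact ⟨0, le_antisymm this (fmax0 s hs)⟩
      | succ k =>
        have h1 : s < f k := hmin k (by omega)
        have h2 : s ≤ f (k + 1) := fmaxs k s hs h1
        have h3 : f (k+1) ≤ s := by rw [hjj] at hj; exact hj
        exact ⟨k + 1, le_antisymm h3 h2⟩
  have hstep : ∀ n, f n ≤ m + 1 → f (n + 1) = f n - 1 := by
    intro n hn
    have h1 : f n - 1 ∈ S := hm (by simp; omega)
    have h2 : f n - 1 ≤ f (n+1) := fmaxs n _ h1 (by omega)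
    have := flt n
    omega
  set N : ℕ := (f 0 - m - 1).toNat with hNdef
  have hfN : f N ≤ m + 1 := by
    have := fdecay 0 N
    simp at this
    omega
  have hev : ∀ k : ℕ, f (N + k) = f N - k := by
    intro k
    induction k with
    | zero => simp
    | succ n ih =>
      have hle : f (N + n) ≤ f N := hanti.antitone (Nat.le_add_right _ _)
      have := hstep (N + n) (by omega)
      have heq : N + (n + 1) = (N + n) + 1 := by omega
      rw [heq, this]
      push_cast
      omega
  set c : ℤ := f N + N with hcdef
  have hc : ∀ j : ℕ, N ≤ j → f j = c - j := by
    intro j hj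
    have := hev (j - N)
    have heq : N + (j - N) = j := by omega
    rw [heq] at this
    have : f j = f N - (j - N : ℕ) := this
    have hcast : ((j - N : ℕ) : ℤ) = (j : ℤ) - N := by omega
    omega
  have hge : ∀ j : ℕ, c - j ≤ f j := by
    intro j
    rcases le_or_gt N j with h | h
    · rw [hc j h]
    · have := fdecay j (N - j)
      have heq : j + (N - j) = N := by omega
      rw [heq] at this
      have hcast : ((N - j : ℕ) : ℤ) = (N : ℤ) - j := by omega
      omega
  set p : ℕ →₀ ℕ := Finsupp.onFinset (Finset.range (N + 1))
    (fun j => (f j + j - c).toNat)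
    (fun j hj => by
      simp only [Finset.mem_range]
      by_contra hjN
      have hjN' : N ≤ j := by omega
      have hj' : (f j + j - c).toNat ≠ 0 := hj
      rw [hc j hjN'] at hj'
      simp at hj') with hpdef
  have hpapply : ∀ j, p j = (f j + j - c).toNat := fun j => rfl
  have hanti' : ∀ ⦃i j : ℕ⦄, i ≤ j → p j ≤ p i := by
    intro i j hij
    rw [hpapply, hpapply]
    have := fdecay i (j - i)
    have heq : i + (j - i) = j := by omega
    rw [heq] at this
    have hcast : ((j - i : ℕ) : ℤ) = (j : ℤ) - i := by omega
    omega
  refine ⟨c, ⟨p, hanti'⟩, ?_⟩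
  rw [← hrange]
  have hfin : en ⟨p, hanti'⟩ c = f := by
    funext j
    have h1 : (p j : ℤ) = f j + j - c := by
      rw [hpapply]
      exact Int.toNat_of_nonneg (by have := hge j; omega)
    show (p j : ℤ) - j + c = f j
    omega
  rw [hfin]


lemma slide (S : Set ℤ) (hfin : ∀ a : ℤ, (S ∩ Set.Ioi a).Finite)
    (m : ℤ) (hm : Set.Iic m ⊆ S) (k : ℕ) :
    (S ∩ Set.Ioi (m - k)).ncard = (S ∩ Set.Ioi m).ncard + k := by
  induction k with
  | zero => simp
  | succ n ih =>
    have hins : S ∩ Set.Ioi (m - ((n : ℤ) + 1)) = insert (m - n) (S ∩ Set.Ioi (m - n)) := by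
      ext z
      simp only [Set.mem_inter_iff, Set.mem_Ioi, Set.mem_insert_iff]
      constructor
      · rintro ⟨hz, hlt⟩
        rcases eq_or_lt_of_le (by omega : m - (n : ℤ) ≤ z) with h | h
        · exact Or.inl h.symm
        · exact Or.inr ⟨hz, h⟩
      · rintro (rfl | ⟨hz, hlt⟩)
        · exact ⟨hm (Set.mem_Iic.mpr (by omega)), by omega⟩
        · exact ⟨hz, by omega⟩
    have hcast : m - ((n + 1 : ℕ) : ℤ) = m - ((n : ℤ) + 1) := by push_cast; ring
    rw [hcast, hins, Set.ncard_insert_of_notMem (by simp) (hfin _), ih]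
    omega

lemma charge_spec (ν : Ptn) (c : ℤ) (m : ℤ)
    (hm : Set.Iic m ⊆ Set.range (en ν c)) :
    ((Set.range (en ν c) ∩ Set.Ioi m).ncard : ℤ) + m = c := by
  set S := Set.range (en ν c) with hS
  have hub : ∀ z ∈ S, z ≤ en ν c 0 := by
    rintro z ⟨j, rfl⟩
    exact (en_strictAnti ν c).antitone (Nat.zero_le j)
  have hfin : ∀ a : ℤ, (S ∩ Set.Ioi a).Finite := by
    intro a
    apply (Set.finite_Ioc a (en ν c 0)).subset
    rintro z ⟨hz, hz2⟩
    exact ⟨hz2, hub z hz⟩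
  obtain ⟨N, hN⟩ := en_eventually ν c
  set N' : ℕ := max N (c - m).toNat with hN'def
  set m₀ : ℤ := c - N' with hm₀def
  have hm₀m : m₀ ≤ m := by
    have : (c - m).toNat ≤ N' := le_max_right _ _
    omega
  have hIic : Set.Iic m₀ ⊆ S := by
    intro z hz
    simp only [Set.mem_Iic] at hz
    refine ⟨(c - z).toNat, ?_⟩
    have h1 : N ≤ (c - z).toNat := by
      have := le_max_left N (c - m).toNat
      omega
    rw [hN _ h1]
    omega
  have hNN' : N ≤ N' := le_max_left _ _
  have henN' : en ν c N' = c - N' := hN _ hNN'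
  have hset : S ∩ Set.Ioi m₀ = en ν c '' Set.Iio N' := by
    ext z
    simp only [Set.mem_inter_iff, Set.mem_Ioi, Set.mem_image, Set.mem_Iio, hS,
      Set.mem_range]
    constructor
    · rintro ⟨⟨j, rfl⟩, hgt⟩
      refine ⟨j, ?_, rfl⟩
      by_contra hjN
      have hjN' : N' ≤ j := by omega
      have := (en_strictAnti ν c).antitone hjN'
      rw [henN'] at this
      omega
    · rintro ⟨j, hj, rfl⟩
      refine ⟨⟨j, rfl⟩, ?_⟩
      have := en_strictAnti ν c hj
      rw [henN'] at this
      omega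
  have hcard : (S ∩ Set.Ioi m₀).ncard = N' := by
    rw [hset, Set.ncard_image_of_injective _ (en_strictAnti ν c).injective,
      ← Finset.coe_range, Set.ncard_coe_finset, Finset.card_range]
  have hk : m - ((m - m₀).toNat : ℤ) = m₀ := by omega
  have := slide S hfin m hm (m - m₀).toNat
  rw [hk, hcard] at this
  omega


lemma en_fin (ν : Ptn) (c : ℤ) (a : ℤ) :
    (Set.range (en ν c) ∩ Set.Ioi a).Finite := by
  apply (Set.finite_Ioc a (en ν c 0)).subset
  rintro z ⟨⟨j, rfl⟩, hz2⟩
  exact ⟨hz2, (en_strictAnti ν c).antitone (Nat.zero_le j)⟩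

lemma phi_eq {r : ℕ} (hr : 1 ≤ r) {i i' : Fin r} {z w : ℤ}
    (h : (r : ℤ) * z + ((i : ℕ) + 1) = (r : ℤ) * w + ((i' : ℕ) + 1)) :
    i = i' ∧ z = w := by
  have hr0 : (r : ℤ) ≠ 0 := by positivity
  have hdvd : (r : ℤ) ∣ ((i' : ℕ) : ℤ) - ((i : ℕ) : ℤ) := ⟨z - w, by linarith⟩
  have habs : |((i' : ℕ) : ℤ) - ((i : ℕ) : ℤ)| < (r : ℤ) := by
    have h1 := i.isLt
    have h2 := i'.isLt
    rw [abs_lt]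
    omega
  have h0 := Int.eq_zero_of_abs_lt_dvd hdvd habs
  have hii : (i : ℕ) = (i' : ℕ) := by omega
  refine ⟨Fin.ext hii, mul_left_cancel₀ hr0 (by omega)⟩

lemma decomp {r : ℕ} (hr : 1 ≤ r) (z : ℤ) :
    ∃ i : Fin r, ∃ q : ℤ, z = (r : ℤ) * q + ((i : ℕ) + 1) := by
  have hrpos : (0 : ℤ) < r := by exact_mod_cast hr
  have h1 := Int.emod_nonneg (z - 1) (ne_of_gt hrpos)
  have h2 := Int.emod_lt_of_pos (z - 1) hrpos
  have h3 := Int.mul_ediv_add_emod (z - 1) r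
  refine ⟨⟨((z - 1) % r).toNat, by omega⟩, (z - 1) / r, ?_⟩
  push_cast
  rw [Int.toNat_of_nonneg h1]
  linarith

lemma q_le {r : ℕ} (hr : 1 ≤ r) {m q : ℤ} {n : ℕ} (hn : n < r)
    (h : (r : ℤ) * q + ((n : ℕ) + 1) ≤ (r : ℤ) * m + r) : q ≤ m := by
  have hrpos : (0 : ℤ) < r := by exact_mod_cast hr
  have h1 : (r : ℤ) * q < (r : ℤ) * (m + 1) := by
    have : ((n : ℤ)) + 1 ≥ 1 := by omega
    nlinarith
  have := lt_of_mul_lt_mul_left h1 (le_of_lt hrpos)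
  omega

lemma q_gt {r : ℕ} (hr : 1 ≤ r) {m q : ℤ} {n : ℕ} (hn : n < r)
    (h : (r : ℤ) * m + r < (r : ℤ) * q + ((n : ℕ) + 1)) : m < q := by
  have hrpos : (0 : ℤ) < r := by exact_mod_cast hr
  have h1 : (r : ℤ) * m < (r : ℤ) * q := by
    have : ((n : ℤ)) + 1 ≤ r := by exact_mod_cast hn
    nlinarith
  exact lt_of_mul_lt_mul_left h1 (le_of_lt hrpos)

lemma union_count {r : ℕ} (hr : 1 ≤ r) (c : Fin r → ℤ) (μ : Fin r → Ptn)
    (S : Set ℤ)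
    (hS : S = ⋃ i : Fin r, (fun z => (r : ℤ) * z + ((i : ℕ) + 1)) '' Set.range (en (μ i) (c i)))
    (m : ℤ) (hm : ∀ i, Set.Iic m ⊆ Set.range (en (μ i) (c i))) :
    Set.Iic ((r : ℤ) * m + r) ⊆ S ∧
    ((S ∩ Set.Ioi ((r : ℤ) * m + r)).ncard : ℤ) + ((r : ℤ) * m + r) = (∑ i, c i) + r := by
  have hrpos : (0 : ℤ) < r := by exact_mod_cast hr
  set U : Fin r → Set ℤ := fun i => Set.range (en (μ i) (c i)) with hU
  have hsub : Set.Iic ((r : ℤ) * m + r) ⊆ S := by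
    intro z hz
    simp only [Set.mem_Iic] at hz
    obtain ⟨i, q, rfl⟩ := decomp hr z
    have hq : q ≤ m := q_le hr i.isLt hz
    rw [hS]
    exact Set.mem_iUnion.mpr ⟨i, ⟨q, hm i (Set.mem_Iic.mpr hq), rfl⟩⟩
  refine ⟨hsub, ?_⟩
  set B : Fin r → Set ℤ :=
    fun i => (fun z => (r : ℤ) * z + ((i : ℕ) + 1)) '' (U i ∩ Set.Ioi m) with hB
  have hSm : S ∩ Set.Ioi ((r : ℤ) * m + r) = ⋃ i, B i := by
    ext z
    simp only [Set.mem_inter_iff, Set.mem_Ioi, hS, Set.mem_iUnion, Set.mem_image, hB]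
    constructor
    · rintro ⟨⟨i, q, hq, rfl⟩, hgt⟩
      exact ⟨i, q, ⟨hq, q_gt hr i.isLt hgt⟩, rfl⟩
    · rintro ⟨i, q, ⟨hq, hqm⟩, rfl⟩
      refine ⟨⟨i, q, hq, rfl⟩, ?_⟩
      have : (r : ℤ) * (m + 1) ≤ (r : ℤ) * q := by
        apply mul_le_mul_of_nonneg_left (by omega) (le_of_lt hrpos)
      have hi : (0 : ℤ) ≤ (i : ℕ) := by positivity
      nlinarith
  have hphiinj : ∀ i : Fin r, Function.Injective (fun z : ℤ => (r : ℤ) * z + ((i : ℕ) + 1)) := by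
    intro i z w hzw
    simp only at hzw
    exact mul_left_cancel₀ (ne_of_gt hrpos) (by omega)
  have hBfin : ∀ i, (B i).Finite := fun i => ((en_fin (μ i) (c i) m)).image _
  have hBdisj : ∀ i i' : Fin r, i ≠ i' → Disjoint (B i) (B i') := by
    intro i i' hne
    rw [Set.disjoint_left]
    rintro z ⟨q, hq, rfl⟩ ⟨q', hq', heq⟩
    exact hne (phi_eq hr heq.symm).1
  have hBcard : ∀ i, ((B i).ncard : ℤ) = c i - m := by
    intro i
    have h1 : (B i).ncard = (U i ∩ Set.Ioi m).ncard :=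
      Set.ncard_image_of_injective _ (hphiinj i)
    have h2 := charge_spec (μ i) (c i) m (hm i)
    rw [h1]
    simp only [hU]
    omega
  -- convert to Finset
  classical
  have hcoe : ⋃ i, B i = ↑(Finset.univ.biUnion fun i => (hBfin i).toFinset) := by
    rw [Finset.coe_biUnion]
    simp [Set.Finite.coe_toFinset]
  have hcard : (⋃ i, B i).ncard = ∑ i, (B i).ncard := by
    rw [hcoe, Set.ncard_coe_finset]
    rw [Finset.card_biUnion]
    · apply Finset.sum_congr rfl
      intro i _
      rw [← Set.ncard_coe_finset, Set.Finite.coe_toFinset]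
    · intro i _ i' _ hne
      rw [Function.onFun, Finset.disjoint_left]
      intro a ha ha'
      rw [Set.Finite.mem_toFinset] at ha ha'
      exact (Set.disjoint_left.mp (hBdisj i i' hne)) ha ha'
  rw [hSm, hcard]
  push_cast
  have hsum : ∑ i : Fin r, ((B i).ncard : ℤ) = ∑ i, (c i - m) := by
    apply Finset.sum_congr rfl
    intro i _
    exact hBcard i
  rw [hsum, Finset.sum_sub_distrib, Finset.sum_const, Finset.card_univ, Fintype.card_fin]
  push_cast
  ring

lemma en_Iic (ν : Ptn) (c : ℤ) {N : ℕ} (hN : ∀ j, N ≤ j → en ν c j = c - j) :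
    Set.Iic (c - N) ⊆ Set.range (en ν c) := by
  intro z hz
  simp only [Set.mem_Iic] at hz
  refine ⟨(c - z).toNat, ?_⟩
  rw [hN _ (by omega)]
  omega

lemma en_ub (ν : Ptn) (c : ℤ) : ∀ z ∈ Set.range (en ν c), z ≤ en ν c 0 := by
  rintro z ⟨j, rfl⟩
  exact (en_strictAnti ν c).antitone (Nat.zero_le j)

lemma betaSet_en (ν : Ptn) : ν.betaSet = Set.range (en ν 0) := by
  unfold Ptn.betaSet en
  have hfun : (fun j : ℕ => (ν.parts j : ℤ) - j + 0) = fun j : ℕ => (ν.parts j : ℤ) - j := by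
    funext j
    ring
  rw [hfun]

lemma blendSet_eq (r : ℕ) (b : Fin r → ℤ) (μs : Fin r → Ptn) (i : Fin r) :
    blendSet r b μs i =
      (fun z => (r : ℤ) * z + ((i : ℕ) + 1)) '' Set.range (en (μs i) (b i - 1)) := by
  have hfun : (fun j : ℕ => (r : ℤ) * (((μs i).parts j : ℤ) - ((j : ℤ) + 1) + b i) + ((i : ℕ) + 1))
      = (fun z => (r : ℤ) * z + ((i : ℕ) + 1)) ∘ (en (μs i) (b i - 1)) := by
    funext j
    show _ = (r : ℤ) * (en (μs i) (b i - 1) j) + ((i : ℕ) + 1)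
    unfold en
    ring
  unfold blendSet
  rw [hfun, Set.range_comp]

end Blend

open Blend

/-- Existence, uniqueness and bijectivity of the blended partition: for integers
`b₁ + ⋯ + b_r = 0` and partitions `μ^{[1]}, …, μ^{[r]}`, the sets `S_i` are pairwise
disjoint and there is a unique partition `μ` with `B(μ) = S₁ ⊔ ⋯ ⊔ S_r`; moreover,
every partition arises from exactly one such tuple `(b₁,…,b_r; μ^{[1]},…,μ^{[r]})`. -/
theorem stmt10 (r : ℕ) (hr : 1 ≤ r) :
    (∀ (b : Fin r → ℤ), (∑ i, b i) = 0 → ∀ μs : Fin r → Ptn,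
      (∀ i i' : Fin r, i ≠ i' → Disjoint (blendSet r b μs i) (blendSet r b μs i'))
      ∧ (∃! μ : Ptn, μ.betaSet = ⋃ i, blendSet r b μs i))
    ∧ (∀ ν : Ptn, ∃! p : (Fin r → ℤ) × (Fin r → Ptn),
        (∑ i, p.1 i) = 0 ∧ ν.betaSet = ⋃ i, blendSet r p.1 p.2 i) := by
  haveI : Nonempty (Fin r) := ⟨⟨0, hr⟩⟩
  classical
  have hrpos : (0 : ℤ) < r := by exact_mod_cast hr
  constructor
  · intro b hb μs
    have hdisj : ∀ i i' : Fin r, i ≠ i' →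
        Disjoint (blendSet r b μs i) (blendSet r b μs i') := by
      intro i i' hne
      rw [Set.disjoint_left]
      rintro z ⟨j, rfl⟩ ⟨j', heq⟩
      exact hne (phi_eq hr heq).1.symm
    refine ⟨hdisj, ?_⟩
    set S : Set ℤ := ⋃ i, blendSet r b μs i with hSdef
    have hSeq : S = ⋃ i : Fin r,
        (fun z => (r : ℤ) * z + ((i : ℕ) + 1)) '' Set.range (en (μs i) (b i - 1)) :=
      Set.iUnion_congr fun i => blendSet_eq r b μs i
    choose N hN using fun i => en_eventually (μs i) (b i - 1)
    set m : ℤ := Finset.univ.inf' Finset.univ_nonempty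
      (fun i => b i - 1 - (N i : ℤ)) with hmdef
    have hm : ∀ i, Set.Iic m ⊆ Set.range (en (μs i) (b i - 1)) := by
      intro i
      refine Set.Subset.trans (Set.Iic_subset_Iic.mpr ?_) (en_Iic (μs i) _ (hN i))
      exact Finset.inf'_le _ (Finset.mem_univ i)
    obtain ⟨hsub, hcount⟩ := union_count hr (fun i => b i - 1) μs S hSeq m hm
    set M : ℤ := Finset.univ.sup' Finset.univ_nonempty
      (fun i => (r : ℤ) * en (μs i) (b i - 1) 0 + ((i : ℕ) + 1)) with hMdef
    have hM : ∀ z ∈ S, z ≤ M := by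
      intro z hz
      rw [hSeq] at hz
      obtain ⟨i, hzi⟩ := Set.mem_iUnion.mp hz
      obtain ⟨q, hq, rfl⟩ := hzi
      have h1 : q ≤ en (μs i) (b i - 1) 0 := en_ub _ _ q hq
      have h2 : (r : ℤ) * q ≤ (r : ℤ) * en (μs i) (b i - 1) 0 :=
        mul_le_mul_of_nonneg_left h1 (le_of_lt hrpos)
      calc (r : ℤ) * q + ((i : ℕ) + 1)
          ≤ (r : ℤ) * en (μs i) (b i - 1) 0 + ((i : ℕ) + 1) := by omega
        _ ≤ M := by
            rw [hMdef]
            exact Finset.le_sup' (fun i : Fin r => (r : ℤ) * en (μs i) (b i - 1) 0 + ((i : ℕ) + 1))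
              (Finset.mem_univ i)
    obtain ⟨c, ν, hν⟩ := exists_pair S ((r : ℤ) * m + r) hsub M hM
    have hch := charge_spec ν c ((r : ℤ) * m + r) (by rw [← hν]; exact hsub)
    rw [← hν] at hch
    have hsumb : (∑ i, (b i - 1)) = ∑ i, b i - r := by
      rw [Finset.sum_sub_distrib, Finset.sum_const, Finset.card_univ, Fintype.card_fin]
      push_cast
      ring
    have hc0 : c = 0 := by
      rw [hsumb, hb] at hcount
      linarith
    subst hc0
    refine ⟨ν, (betaSet_en ν).trans hν.symm, ?_⟩
    intro μ' hμ'
    have heq : Set.range (en μ' 0) = Set.range (en ν 0) := by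
      rw [← betaSet_en, hμ', hν]
    exact (pair_eq heq).2
  · intro ν
    obtain ⟨N, hN⟩ := en_eventually ν 0
    set U : Fin r → Set ℤ :=
      fun i => {q : ℤ | (r : ℤ) * q + ((i : ℕ) + 1) ∈ Set.range (en ν 0)} with hUdef
    have hmU : ∀ i : Fin r, Set.Iic (-(N : ℤ) - r) ⊆ U i := by
      intro i q hq
      simp only [Set.mem_Iic] at hq
      have hq0 : q ≤ 0 := by omega
      have h1 : (r : ℤ) * q ≤ 1 * q :=
        mul_le_mul_of_nonpos_right (by exact_mod_cast hr) hq0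
      have h2 : ((i : ℕ) : ℤ) + 1 ≤ r := by
        have := i.isLt
        omega
      have h3 : (r : ℤ) * q + ((i : ℕ) + 1) ≤ 0 - (N : ℤ) := by omega
      exact en_Iic ν 0 hN (Set.mem_Iic.mpr h3)
    have hMU : ∀ i : Fin r, ∀ q ∈ U i, q ≤ max (en ν 0 0) 0 := by
      intro i q hq
      have h1 : (r : ℤ) * q + ((i : ℕ) + 1) ≤ en ν 0 0 := en_ub ν 0 _ hq
      rcases le_or_gt q 0 with h | h
      · omega
      · have h2 : q ≤ (r : ℤ) * q := le_mul_of_one_le_left (le_of_lt h) (by exact_mod_cast hr)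
        have h3 : (0 : ℤ) ≤ (i : ℕ) := by positivity
        omega
    choose c μ hUeq using fun i =>
      exists_pair (U i) _ (hmU i) _ (hMU i)
    have hblend : ∀ i : Fin r, blendSet r (fun i => c i + 1) μ i =
        (fun z => (r : ℤ) * z + ((i : ℕ) + 1)) '' U i := by
      intro i
      rw [blendSet_eq]
      have : c i + 1 - 1 = c i := by ring
      rw [this, ← hUeq i]
    have hunion : (⋃ i, blendSet r (fun i => c i + 1) μ i) = ν.betaSet := by
      rw [betaSet_en]
      apply Set.Subset.antisymm
      · intro z hz
        obtain ⟨i, hzi⟩ := Set.mem_iUnion.mp hz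
        rw [hblend i] at hzi
        obtain ⟨q, hq, rfl⟩ := hzi
        exact hq
      · intro z hz
        obtain ⟨i, q, rfl⟩ := decomp hr z
        apply Set.mem_iUnion.mpr ⟨i, _⟩
        rw [hblend i]
        exact ⟨q, hz, rfl⟩
    have hSeq' : Set.range (en ν 0) = ⋃ i : Fin r,
        (fun z => (r : ℤ) * z + ((i : ℕ) + 1)) '' Set.range (en (μ i) (c i)) := by
      rw [← betaSet_en, ← hunion]
      apply Set.iUnion_congr
      intro i
      rw [hblend i, hUeq i]
    have hm' : ∀ i, Set.Iic (-(N : ℤ) - r) ⊆ Set.range (en (μ i) (c i)) := by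
      intro i
      rw [← hUeq i]
      exact hmU i
    obtain ⟨hsub, hcount⟩ := union_count hr c μ _ hSeq' _ hm'
    have hch := charge_spec ν 0 ((r : ℤ) * (-(N : ℤ) - r) + r) hsub
    have hsum : (∑ i, (c i + 1)) = 0 := by
      have h1 : (∑ i, (c i + 1)) = ∑ i, c i + r := by
        rw [Finset.sum_add_distrib, Finset.sum_const, Finset.card_univ, Fintype.card_fin]
        push_cast
        ring
      rw [h1]
      linarith
    refine ⟨⟨fun i => c i + 1, μ⟩, ⟨hsum, hunion.symm⟩, ?_⟩
    rintro ⟨b', μ'⟩ ⟨hb', hun'⟩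
    have hkey : ∀ i : Fin r, Set.range (en (μ' i) (b' i - 1)) = Set.range (en (μ i) (c i)) := by
      intro i
      rw [← hUeq i]
      ext q
      constructor
      · intro hq
        have : (r : ℤ) * q + ((i : ℕ) + 1) ∈ ν.betaSet := by
          rw [hun']
          apply Set.mem_iUnion.mpr ⟨i, _⟩
          rw [blendSet_eq]
          exact ⟨q, hq, rfl⟩
        rw [betaSet_en] at this
        exact this
      · intro hq
        have h2 : (r : ℤ) * q + ((i : ℕ) + 1) ∈ ⋃ i', blendSet r b' μ' i' := by
          rw [← hun', betaSet_en]
          exact hq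
        obtain ⟨i', hzi⟩ := Set.mem_iUnion.mp h2
        rw [blendSet_eq] at hzi
        obtain ⟨w, hw, heq⟩ := hzi
        obtain ⟨hii, hqw⟩ := phi_eq hr heq
        subst hii
        rw [hqw] at hw
        exact hw
    have hcomp : ∀ i : Fin r, b' i = c i + 1 ∧ μ' i = μ i := by
      intro i
      obtain ⟨h1, h2⟩ := pair_eq (hkey i)
      exact ⟨by omega, h2⟩
    ext i
    · exact (hcomp i).1
    · exact (hcomp i).2
end
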